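/- Every Bratteli diagram admits a probability weight function; that is, for every Bratteli diagram B = (V,E) with all levels finite and nonempty, there exists a weight function w: V_0 ∪ E → [0,∞) satisfying the weight axioms with ∑_{v∈V_0} w(v) = 1. -/

import Mathlib

open Classical Filter Topology MeasureTheory

structure Bratteli where
  V : ℕ → Type
  E : ℕ → Type
  finV : ∀ k, Fintype (V k)
  finE : ∀ k, Fintype (E k)
  neV : ∀ k, Nonempty (V k)
  src : ∀ k, E k → V k
  rng : ∀ k, E k → V (k + 1)
  srcSurj : ∀ k, Function.Surjective (src k)
  rngSurj : ∀ k, Function.Surjective (rng k)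

attribute [instance] Bratteli.finV Bratteli.finE Bratteli.neV

namespace Bratteli

variable {B : Bratteli}

/-- An infinite path in a Bratteli diagram, starting at level 0. -/
structure Path (B : Bratteli) where
  edges : ∀ k, B.E k
  compat : ∀ k, B.rng k (edges k) = B.src (k + 1) (edges (k + 1))

/-- Tail equivalence: agreement in all but finitely many coordinates. -/
def TailEquiv (x y : B.Path) : Prop := ∃ N, ∀ k, N ≤ k → x.edges k = y.edges k

def tailClass (x : B.Path) : Set B.Path := {y | TailEquiv x y}

/-- Cylinder-set (product of discrete) topology on the path space. -/
instance (B : Bratteli) : TopologicalSpace B.Path :=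
  TopologicalSpace.induced Path.edges (@Pi.topologicalSpace ℕ (fun k => B.E k) (fun _ => ⊥))

/-- A finite path from level 0 through level n. -/
structure FinPath (B : Bratteli) (n : ℕ) where
  edges : ∀ k, k < n → B.E k
  compat : ∀ k (h : k + 1 < n),
    B.rng k (edges k (Nat.lt_of_succ_lt h)) = B.src (k + 1) (edges (k + 1) h)

def FinPath.startV {n : ℕ} (p : B.FinPath (n + 1)) : B.V 0 :=
  B.src 0 (p.edges 0 (Nat.succ_pos n))

def FinPath.endV {n : ℕ} (p : B.FinPath (n + 1)) : B.V (n + 1) :=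
  B.rng n (p.edges n (Nat.lt_succ_self n))

/-- A finite path from level a of length n. -/
structure SegPath (B : Bratteli) (a n : ℕ) where
  edges : ∀ i, i < n → B.E (a + i)
  compat : ∀ i (h : i + 1 < n),
    B.rng (a + i) (edges i (Nat.lt_of_succ_lt h)) = B.src (a + (i + 1)) (edges (i + 1) h)

def SegPath.startV {a n : ℕ} (p : B.SegPath a (n + 1)) : B.V a :=
  B.src a (p.edges 0 (Nat.succ_pos n))

def SegPath.endV {a n : ℕ} (p : B.SegPath a (n + 1)) : B.V (a + n + 1) :=
  B.rng (a + n) (p.edges n (Nat.lt_succ_self n))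

/-- A weight function: nonnegative weights on level-0 vertices and on edges. -/
structure WeightFn (B : Bratteli) where
  w0 : B.V 0 → ℝ
  we : ∀ k, B.E k → ℝ
  nonneg0 : ∀ v, 0 ≤ w0 v
  nonnegE : ∀ k e, 0 ≤ we k e

/-- The product w(s(e₁))·∏ w(eᵢ) along a finite path. -/
def WeightFn.finProd {n : ℕ} (w : B.WeightFn) (p : B.FinPath (n + 1)) : ℝ :=
  w.w0 p.startV * ∏ i : Fin (n + 1), w.we i (p.edges i i.isLt)

/-- The partial product along an infinite path. -/
def WeightFn.prodPath (w : B.WeightFn) (x : B.Path) (n : ℕ) : ℝ :=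
  w.w0 (B.src 0 (x.edges 0)) * ∏ i ∈ Finset.range n, w.we i (x.edges i)

/-- The weight-function axioms (i) path-independence, (ii) unit outgoing mass,
(iii) decay along non-periodic paths. -/
structure IsWeight (w : B.WeightFn) : Prop where
  pathIndep : ∀ n (p q : B.FinPath (n + 1)), p.endV = q.endV → w.finProd p = w.finProd q
  outSum : ∀ k (v : B.V k), (∑ e : B.E k, if B.src k e = v then w.we k e else 0) = 1
  decay : ∀ x : B.Path, ¬ (tailClass x).Finite →
    Filter.Tendsto (fun n => w.prodPath x n) Filter.atTop (nhds 0)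



noncomputable def stage (B : Bratteli) (n : ℕ) (k : ℕ) (v : B.V k) : ℝ :=
  if n ≤ k then 1
  else ∑ e : B.E k, if B.src k e = v then B.stage n (k+1) (B.rng k e) else 0
termination_by n - k
decreasing_by omega

lemma stage_of_le {n k : ℕ} (h : n ≤ k) (v : B.V k) : B.stage n k v = 1 := by
  rw [stage, if_pos h]

lemma stage_of_lt {n k : ℕ} (h : k < n) (v : B.V k) :
    B.stage n k v = ∑ e : B.E k, if B.src k e = v then B.stage n (k+1) (B.rng k e) else 0 := by
  rw [stage, if_neg (by omega)]

lemma stage_nonneg (n k : ℕ) (v : B.V k) : 0 ≤ B.stage n k v := by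
  by_cases h : n ≤ k
  · rw [stage_of_le h]; norm_num
  · rw [stage_of_lt (by omega)]
    refine Finset.sum_nonneg fun e _ => ?_
    split
    · exact stage_nonneg n (k+1) _
    · exact le_refl 0
termination_by n - k
decreasing_by omega

lemma one_le_sum_stage (n k : ℕ) : (1:ℝ) ≤ ∑ v : B.V k, B.stage n k v := by
  by_cases h : n ≤ k
  · simp only [stage_of_le h, Finset.sum_const, Finset.card_univ, nsmul_eq_mul, mul_one]
    exact_mod_cast Nat.one_le_iff_ne_zero.mpr Fintype.card_ne_zero
  · have hlt : k < n := by omega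
    simp only [stage_of_lt hlt]
    rw [Finset.sum_comm]
    have hrw : ∀ e : B.E k,
        (∑ v : B.V k, if B.src k e = v then B.stage n (k+1) (B.rng k e) else 0)
          = B.stage n (k+1) (B.rng k e) := by
      intro e; rw [Finset.sum_ite_eq]; simp
    rw [Finset.sum_congr rfl fun e _ => hrw e]
    obtain ⟨s, hs⟩ := (B.rngSurj k).hasRightInverse
    have hsi : Function.Injective s := fun a b hab => by rw [← hs a, ← hs b, hab]
    calc (1:ℝ) ≤ ∑ v' : B.V (k+1), B.stage n (k+1) v' := one_le_sum_stage n (k+1)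
      _ = ∑ v' : B.V (k+1), B.stage n (k+1) (B.rng k (s v')) := by
            exact Finset.sum_congr rfl fun v' _ => by rw [hs v']
      _ = ∑ e ∈ Finset.univ.image s, B.stage n (k+1) (B.rng k e) := by
            rw [Finset.sum_image fun a _ b _ hab => hsi hab]
      _ ≤ ∑ e : B.E k, B.stage n (k+1) (B.rng k e) := by
            exact Finset.sum_le_sum_of_subset_of_nonneg (Finset.subset_univ _)
              (fun e _ _ => stage_nonneg n (k+1) _)
termination_by n - k
decreasing_by all_goals omega

lemma stage_le_zero_level (n k : ℕ) (v : B.V k) :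
    ∃ u : B.V 0, B.stage n k v ≤ B.stage n 0 u := by
  induction k with
  | zero => exact ⟨v, le_refl _⟩
  | succ k ih =>
    obtain ⟨e, he⟩ := B.rngSurj k v
    have h1 : B.stage n (k+1) v ≤ B.stage n k (B.src k e) := by
      by_cases h : n ≤ k
      · rw [stage_of_le (Nat.le_succ_of_le h) v, stage_of_le h (B.src k e)]
      · rw [stage_of_lt (Nat.not_le.mp h) (B.src k e)]
        have := Finset.single_le_sum
          (f := fun e' : B.E k => if B.src k e' = B.src k e then B.stage n (k+1) (B.rng k e') else 0)
          (fun e' _ => by split <;> [exact stage_nonneg n (k+1) _; exact le_refl 0])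
          (Finset.mem_univ e)
        rw [if_pos rfl, he] at this
        exact this
    obtain ⟨u, hu⟩ := ih (B.src k e)
    exact ⟨u, h1.trans hu⟩

lemma exists_thread (B : Bratteli) : ∃ g : ∀ k, B.V k → ℝ,
    (∀ k (v : B.V k), 0 ≤ g k v) ∧
    (∀ k (v : B.V k), g k v = ∑ e : B.E k, if B.src k e = v then g (k+1) (B.rng k e) else 0) ∧
    (∑ v : B.V 0, g 0 v) = 1 := by
  set S : ℕ → ℝ := fun n => ∑ u : B.V 0, B.stage n 0 u with hS
  have hS1 : ∀ n, (1:ℝ) ≤ S n := fun n => one_le_sum_stage n 0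
  have hSpos : ∀ n, (0:ℝ) < S n := fun n => zero_lt_one.trans_le (hS1 n)
  set G : ℕ → ∀ k, B.V k → ℝ := fun n k v => B.stage n k v / S n with hG
  have hG01 : ∀ n k (v : B.V k), G n k v ∈ Set.Icc (0:ℝ) 1 := by
    intro n k v
    constructor
    · exact div_nonneg (stage_nonneg n k v) (hSpos n).le
    · rw [div_le_one (hSpos n)]
      obtain ⟨u, hu⟩ := stage_le_zero_level (B := B) n k v
      exact hu.trans (Finset.single_le_sum (fun u' _ => stage_nonneg n 0 u') (Finset.mem_univ u))
  let U : Ultrafilter ℕ := Ultrafilter.of atTop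
  have hU : (U : Filter ℕ) ≤ atTop := Ultrafilter.of_le _
  have key : ∀ k (v : B.V k), ∃ c : ℝ, Tendsto (fun n => G n k v) (U : Filter ℕ) (𝓝 c) := by
    intro k v
    have hle : (U.map (fun n => G n k v) : Filter ℝ) ≤ Filter.principal (Set.Icc 0 1) := by
      rw [Ultrafilter.coe_map, Filter.le_principal_iff, Filter.mem_map]
      exact Filter.univ_mem' fun n => hG01 n k v
    obtain ⟨c, _, hc⟩ := (isCompact_Icc (a := (0:ℝ)) (b := 1)).ultrafilter_le_nhds
      (U.map (fun n => G n k v)) hle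
    rw [Ultrafilter.coe_map] at hc
    exact ⟨c, hc⟩
  choose g hg using key
  refine ⟨g, ?_, ?_, ?_⟩
  · intro k v
    exact ge_of_tendsto (hg k v) (Filter.Eventually.of_forall fun n => (hG01 n k v).1)
  · intro k v
    have h2 : Tendsto (fun n => ∑ e : B.E k, if B.src k e = v then G n (k+1) (B.rng k e) else 0)
        (U : Filter ℕ) (𝓝 (∑ e : B.E k, if B.src k e = v then g (k+1) (B.rng k e) else 0)) := by
      refine tendsto_finset_sum _ fun e _ => ?_
      split
      · exact hg (k+1) (B.rng k e)
      · exact tendsto_const_nhds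
    have heq : ∀ᶠ n in (U : Filter ℕ),
        G n k v = ∑ e : B.E k, if B.src k e = v then G n (k+1) (B.rng k e) else 0 := by
      refine Filter.Eventually.filter_mono hU ?_
      rw [Filter.eventually_atTop]
      refine ⟨k+1, fun n hn => ?_⟩
      have hlt : k < n := by omega
      simp only [hG]
      rw [stage_of_lt hlt, Finset.sum_div]
      exact Finset.sum_congr rfl fun e _ => by split <;> simp
    exact tendsto_nhds_unique (hg k v) (h2.congr' (heq.mono fun n h => h.symm))
  · have h2 : Tendsto (fun n => ∑ v : B.V 0, G n 0 v) (U : Filter ℕ) (𝓝 (∑ v : B.V 0, g 0 v)) :=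
      tendsto_finset_sum _ fun v _ => hg 0 v
    have heq : ∀ n, ∑ v : B.V 0, G n 0 v = 1 := fun n => by
      simp only [hG]; rw [← Finset.sum_div]; exact div_self (hSpos n).ne'
    have h3 : Tendsto (fun _ : ℕ => (1:ℝ)) (U : Filter ℕ) (𝓝 (∑ v : B.V 0, g 0 v)) := by
      simpa only [heq] using h2
    exact tendsto_nhds_unique h3 tendsto_const_nhds


noncomputable def npaths (B : Bratteli) : ∀ n, B.V n → ℕ
  | 0, _ => 1
  | n+1, v => ∑ e : B.E n, if B.rng n e = v then B.npaths n (B.src n e) else 0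

lemma npaths_pos : ∀ n (v : B.V n), 1 ≤ B.npaths n v
  | 0, _ => le_refl 1
  | n+1, v => by
    obtain ⟨e, he⟩ := B.rngSurj n v
    have h1 := Finset.single_le_sum
      (f := fun e' : B.E n => if B.rng n e' = v then B.npaths n (B.src n e') else 0)
      (fun e' _ => Nat.zero_le _) (Finset.mem_univ e)
    rw [if_pos he] at h1
    rw [npaths]
    exact (npaths_pos n (B.src n e)).trans h1

def PathsTo (B : Bratteli) : ∀ n, B.V n → Type
  | 0, _ => PUnit
  | n+1, v => Σ e : {e : B.E n // B.rng n e = v}, B.PathsTo n (B.src n e.1)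

noncomputable instance instFintypePathsTo : ∀ n (v : B.V n), Fintype (B.PathsTo n v)
  | 0, _ => inferInstanceAs (Fintype PUnit)
  | n+1, v => by
    letI : ∀ e : {e : B.E n // B.rng n e = v}, Fintype (B.PathsTo n (B.src n e.1)) :=
      fun e => instFintypePathsTo n _
    exact inferInstanceAs (Fintype (Σ e : {e : B.E n // B.rng n e = v}, B.PathsTo n (B.src n e.1)))

lemma natcard_pathsTo : ∀ n (v : B.V n), Nat.card (B.PathsTo n v) = B.npaths n v
  | 0, v => by
    have : Nat.card (B.PathsTo 0 v) = Nat.card PUnit := rfl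
    rw [this, npaths]
    simp
  | n+1, v => by
    rw [npaths]
    have h0 : Nat.card (B.PathsTo (n+1) v)
        = Nat.card (Σ e : {e : B.E n // B.rng n e = v}, B.PathsTo n (B.src n e.1)) := rfl
    rw [h0, Nat.card_eq_fintype_card, Fintype.card_sigma]
    have h2 : ∀ e : {e : B.E n // B.rng n e = v},
        Fintype.card (B.PathsTo n (B.src n e.1)) = B.npaths n (B.src n e.1) := fun e => by
      rw [← Nat.card_eq_fintype_card]
      exact natcard_pathsTo n _
    rw [Finset.sum_congr rfl fun e _ => h2 e]
    rw [← Finset.sum_subtype (Finset.univ.filter fun e : B.E n => B.rng n e = v)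
      (fun e => by simp) (fun e => B.npaths n (B.src n e))]
    rw [Finset.sum_filter]

noncomputable def prefixPath (y : B.Path) : ∀ n (v : B.V n), B.src n (y.edges n) = v → B.PathsTo n v
  | 0, _, _ => PUnit.unit
  | n+1, v, h => ⟨⟨y.edges n, (y.compat n).trans h⟩, prefixPath y n (B.src n (y.edges n)) rfl⟩

lemma Path.ext' {y z : B.Path} (h : ∀ k, y.edges k = z.edges k) : y = z := by
  cases y with
  | mk e c =>
    cases z with
    | mk e' c' =>
      have : e = e' := funext h
      subst this
      rfl

lemma prefixPath_heq (z : B.Path) (n : ℕ) (v v' : B.V n)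
    (h : B.src n (z.edges n) = v) (h' : B.src n (z.edges n) = v') :
    HEq (prefixPath z n v h) (prefixPath z n v' h') := by
  subst h; subst h'; rfl

lemma prefixPath_inj : ∀ n (v : B.V n) (y z : B.Path)
    (hy : B.src n (y.edges n) = v) (hz : B.src n (z.edges n) = v),
    (∀ k, n ≤ k → y.edges k = z.edges k) →
    prefixPath y n v hy = prefixPath z n v hz → y = z
  | 0, v, y, z, hy, hz, hagree, _ => Path.ext' fun k => hagree k (Nat.zero_le k)
  | n+1, v, y, z, hy, hz, hagree, heq => by
    rw [prefixPath, prefixPath] at heq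
    obtain ⟨hfst, hsnd⟩ := Sigma.ext_iff.mp heq
    have e1 : y.edges n = z.edges n := congrArg Subtype.val hfst
    have hz' : B.src n (z.edges n) = B.src n (y.edges n) := by rw [e1]
    have hswap : HEq (prefixPath z n (B.src n (z.edges n)) rfl)
        (prefixPath z n (B.src n (y.edges n)) hz') := prefixPath_heq z n _ _ rfl hz'
    have hmain : prefixPath y n (B.src n (y.edges n)) rfl
        = prefixPath z n (B.src n (y.edges n)) hz' := eq_of_heq (hsnd.trans hswap)
    refine prefixPath_inj n (B.src n (y.edges n)) y z rfl hz' ?_ hmain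
    intro k hk
    rcases Nat.eq_or_lt_of_le hk with h | h
    · subst h; exact e1
    · exact hagree k h

lemma npaths_mono_along (x : B.Path) (n : ℕ) :
    B.npaths n (B.src n (x.edges n)) ≤ B.npaths (n+1) (B.src (n+1) (x.edges (n+1))) := by
  rw [npaths]
  have h1 := Finset.single_le_sum
    (f := fun e' : B.E n => if B.rng n e' = B.src (n+1) (x.edges (n+1))
      then B.npaths n (B.src n e') else 0)
    (fun e' _ => Nat.zero_le _) (Finset.mem_univ (x.edges n))
  rw [if_pos (x.compat n)] at h1
  exact h1

lemma exists_npaths_ge (x : B.Path) (hx : ¬ (tailClass x).Finite) (M : ℕ) :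
    ∃ n, M ≤ B.npaths n (B.src n (x.edges n)) := by
  by_contra hc
  push_neg at hc
  have hx' : (tailClass x).Infinite := hx
  obtain ⟨t, hts, htc⟩ := hx'.exists_subset_card_eq (M + 1)
  have hall : ∀ y : B.Path, ∃ Ny : ℕ, y ∈ t → ∀ k, Ny ≤ k → x.edges k = y.edges k := by
    intro y
    by_cases hy : y ∈ t
    · obtain ⟨N, hN⟩ := hts hy
      exact ⟨N, fun _ => hN⟩
    · exact ⟨0, fun h => absurd h hy⟩
  choose N hN using hall
  set n := t.sup N with hn
  have hsrc : ∀ y ∈ t, B.src n (y.edges n) = B.src n (x.edges n) := by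
    intro y hy
    rw [hN y hy n (Finset.le_sup hy)]
  set f : B.Path → B.PathsTo n (B.src n (x.edges n)) := fun y =>
    if h : B.src n (y.edges n) = B.src n (x.edges n) then prefixPath y n _ h
    else prefixPath x n _ rfl with hf
  have hinj : Set.InjOn f ↑t := by
    intro y hy z hz hyz
    rw [hf] at hyz
    dsimp only at hyz
    rw [dif_pos (hsrc y hy), dif_pos (hsrc z hz)] at hyz
    refine prefixPath_inj n _ y z (hsrc y hy) (hsrc z hz) ?_ hyz
    intro k hk
    rw [← hN y hy k ((Finset.le_sup hy).trans hk), ← hN z hz k ((Finset.le_sup hz).trans hk)]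
  have hcard : t.card ≤ (Finset.univ : Finset (B.PathsTo n (B.src n (x.edges n)))).card :=
    Finset.card_le_card_of_injOn f (fun _ _ => Finset.mem_univ _) hinj
  rw [Finset.card_univ, ← Nat.card_eq_fintype_card, natcard_pathsTo] at hcard
  have := hc n
  omega

lemma sum_npaths_mul_g (g : ∀ k, B.V k → ℝ)
    (hcons : ∀ k (v : B.V k), g k v = ∑ e : B.E k, if B.src k e = v then g (k+1) (B.rng k e) else 0)
    (hsum : (∑ v : B.V 0, g 0 v) = 1) :
    ∀ n, ∑ v : B.V n, (B.npaths n v : ℝ) * g n v = 1 := by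
  intro n
  induction n with
  | zero => simpa [npaths] using hsum
  | succ n ih =>
    have s1 : ∑ v : B.V (n+1), (B.npaths (n+1) v : ℝ) * g (n+1) v
        = ∑ v : B.V (n+1), ∑ e : B.E n,
            (if B.rng n e = v then (B.npaths n (B.src n e) : ℝ) * g (n+1) v else 0) := by
      refine Finset.sum_congr rfl fun v _ => ?_
      rw [npaths]
      push_cast
      rw [Finset.sum_mul]
      exact Finset.sum_congr rfl fun e _ => by split <;> simp
    have s2 : ∑ v : B.V (n+1), ∑ e : B.E n,
          (if B.rng n e = v then (B.npaths n (B.src n e) : ℝ) * g (n+1) v else 0)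
        = ∑ e : B.E n, (B.npaths n (B.src n e) : ℝ) * g (n+1) (B.rng n e) := by
      rw [Finset.sum_comm]
      refine Finset.sum_congr rfl fun e _ => ?_
      rw [Finset.sum_ite_eq]
      simp
    have s3 : ∑ e : B.E n, (B.npaths n (B.src n e) : ℝ) * g (n+1) (B.rng n e)
        = ∑ u : B.V n, ∑ e : B.E n,
            (if B.src n e = u then (B.npaths n u : ℝ) * g (n+1) (B.rng n e) else 0) := by
      rw [Finset.sum_comm]
      refine Finset.sum_congr rfl fun e _ => ?_
      have : ∀ u : B.V n, (if B.src n e = u then (B.npaths n u : ℝ) * g (n+1) (B.rng n e) else 0)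
          = if B.src n e = u then (B.npaths n (B.src n e) : ℝ) * g (n+1) (B.rng n e) else 0 := by
        intro u
        split
        next h => rw [h]
        next => rfl
      rw [Finset.sum_congr rfl fun u _ => this u, Finset.sum_ite_eq]
      simp
    have s4 : ∑ u : B.V n, ∑ e : B.E n,
          (if B.src n e = u then (B.npaths n u : ℝ) * g (n+1) (B.rng n e) else 0)
        = ∑ u : B.V n, (B.npaths n u : ℝ) * g n u := by
      refine Finset.sum_congr rfl fun u _ => ?_
      rw [hcons n u, Finset.mul_sum]
      exact Finset.sum_congr rfl fun e _ => by split <;> simp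
    rw [s1, s2, s3, s4, ih]

/-- Every Bratteli diagram admits a probability weight function. -/
theorem exists_probability_weight_function (B : Bratteli) :
    ∃ w : B.WeightFn, IsWeight w ∧ ∑ v : B.V 0, w.w0 v = 1 := by
  obtain ⟨g, hg0, hcons, hsum⟩ := exists_thread B
  have hzero : ∀ k (e : B.E k), g k (B.src k e) = 0 → g (k+1) (B.rng k e) = 0 := by
    intro k e h
    have h' : (∑ e' : B.E k, if B.src k e' = B.src k e then g (k+1) (B.rng k e') else 0) = 0 :=
      (hcons k (B.src k e)).symm.trans h
    have hterm := (Finset.sum_eq_zero_iff_of_nonneg (fun e' _ => by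
      split
      · exact hg0 _ _
      · exact le_refl 0)).1 h' e (Finset.mem_univ e)
    rw [if_pos rfl] at hterm
    exact hterm
  set we : ∀ k, B.E k → ℝ := fun k e =>
    if g k (B.src k e) = 0
    then ((Finset.univ.filter fun e' => B.src k e' = B.src k e).card : ℝ)⁻¹
    else g (k+1) (B.rng k e) / g k (B.src k e) with hwe
  have hwe_nonneg : ∀ k (e : B.E k), 0 ≤ we k e := by
    intro k e
    rw [hwe]
    dsimp only
    split
    · exact inv_nonneg.mpr (Nat.cast_nonneg _)
    · exact div_nonneg (hg0 _ _) (hg0 _ _)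
  set w : B.WeightFn := ⟨fun v => g 0 v, we, fun v => hg0 0 v, hwe_nonneg⟩ with hw
  have step : ∀ k (e : B.E k), g k (B.src k e) * we k e = g (k+1) (B.rng k e) := by
    intro k e
    by_cases h : g k (B.src k e) = 0
    · rw [h, zero_mul, hzero k e h]
    · rw [hwe]
      dsimp only
      rw [if_neg h, mul_comm, div_mul_cancel₀ _ h]
  have houtSum : ∀ k (v : B.V k), (∑ e : B.E k, if B.src k e = v then w.we k e else 0) = 1 := by
    intro k v
    have hwwe : w.we = we := rfl
    rw [hwwe]
    by_cases hv : g k v = 0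
    · have hterm : ∀ e : B.E k, (if B.src k e = v then we k e else 0)
          = if B.src k e = v
            then ((Finset.univ.filter fun e' => B.src k e' = v).card : ℝ)⁻¹ else 0 := by
        intro e
        split
        next h =>
          rw [hwe]
          dsimp only
          rw [h, if_pos (h ▸ hv)]
        next => rfl
      rw [Finset.sum_congr rfl fun e _ => hterm e, ← Finset.sum_filter, Finset.sum_const,
        nsmul_eq_mul]
      have hpos : 0 < (Finset.univ.filter fun e' => B.src k e' = v).card := by
        obtain ⟨e, he⟩ := B.srcSurj k v
        exact Finset.card_pos.mpr ⟨e, by simp [he]⟩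
      rw [mul_inv_cancel₀ (by exact_mod_cast hpos.ne')]
    · have hterm : ∀ e : B.E k, (if B.src k e = v then we k e else 0)
          = if B.src k e = v then g (k+1) (B.rng k e) / g k v else 0 := by
        intro e
        split
        next h =>
          rw [hwe]
          dsimp only
          rw [h, if_neg (h ▸ hv)]
        next => rfl
      rw [Finset.sum_congr rfl fun e _ => hterm e]
      have hdiv : ∀ e : B.E k, (if B.src k e = v then g (k+1) (B.rng k e) / g k v else 0)
          = (if B.src k e = v then g (k+1) (B.rng k e) else 0) / g k v := by
        intro e
        split
        · rfl
        · rw [zero_div]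
      rw [Finset.sum_congr rfl fun e _ => hdiv e, ← Finset.sum_div, ← hcons k v, div_self hv]
  have hkey : ∀ n (p : B.FinPath (n+1)), w.finProd p = g (n+1) p.endV := by
    intro n p
    have main : ∀ m, ∀ hm : m < n+1,
        w.w0 p.startV * ∏ i ∈ Finset.range (m+1),
          (if h : i < n+1 then w.we i (p.edges i h) else 1)
        = g (m+1) (B.rng m (p.edges m hm)) := by
      intro m
      induction m with
      | zero =>
        intro hm
        rw [Finset.prod_range_one, dif_pos hm]
        have hw0 : w.w0 p.startV = g 0 (B.src 0 (p.edges 0 hm)) := rfl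
        rw [hw0]
        exact step 0 (p.edges 0 hm)
      | succ m ih =>
        intro hm
        have hm' : m < n+1 := by omega
        rw [Finset.prod_range_succ, ← mul_assoc, ih hm', dif_pos hm]
        have hcomp : B.rng m (p.edges m hm') = B.src (m+1) (p.edges (m+1) hm) := p.compat m hm
        rw [hcomp]
        exact step (m+1) (p.edges (m+1) hm)
    have hfp : w.finProd p = w.w0 p.startV * ∏ i ∈ Finset.range (n+1),
        (if h : i < n+1 then w.we i (p.edges i h) else 1) := by
      rw [WeightFn.finProd]
      congr 1
      rw [← Fin.prod_univ_eq_prod_range (fun i => if h : i < n+1 then w.we i (p.edges i h) else 1)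
        (n+1)]
      exact Finset.prod_congr rfl fun i _ => by rw [dif_pos i.isLt]
    rw [hfp, main n (Nat.lt_succ_self n)]
    rfl
  have hprodPath : ∀ (x : B.Path) (m : ℕ), w.prodPath x m = g m (B.src m (x.edges m)) := by
    intro x m
    induction m with
    | zero =>
      rw [WeightFn.prodPath]
      simp only [Finset.range_zero, Finset.prod_empty, mul_one]
      rfl
    | succ m ih =>
      have hsplit : w.prodPath x (m+1) = w.prodPath x m * w.we m (x.edges m) := by
        rw [WeightFn.prodPath, WeightFn.prodPath, Finset.prod_range_succ, mul_assoc]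
      rw [hsplit, ih]
      have hwwe : w.we = we := rfl
      rw [hwwe, step m (x.edges m), x.compat m]
  refine ⟨w, ⟨?_, houtSum, ?_⟩, hsum⟩
  · intro n p q h
    rw [hkey n p, hkey n q, h]
  · intro x hx
    have hb : ∀ m : ℕ,
        g m (B.src m (x.edges m)) ≤ ((B.npaths m (B.src m (x.edges m)) : ℝ))⁻¹ := by
      intro m
      have h1 : (B.npaths m (B.src m (x.edges m)) : ℝ) * g m (B.src m (x.edges m)) ≤ 1 := by
        rw [← sum_npaths_mul_g g hcons hsum m]
        exact Finset.single_le_sum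
          (f := fun v => (B.npaths m v : ℝ) * g m v)
          (fun v _ => mul_nonneg (by positivity) (hg0 m v)) (Finset.mem_univ _)
      have hNpos : (0:ℝ) < (B.npaths m (B.src m (x.edges m)) : ℝ) := by
        exact_mod_cast npaths_pos m (B.src m (x.edges m))
      rw [← one_div]
      rw [le_div_iff₀ hNpos]
      linarith [h1]
    have hmono : Monotone (fun m => B.npaths m (B.src m (x.edges m))) :=
      monotone_nat_of_le_succ (npaths_mono_along x)
    have htend : Tendsto (fun m => (B.npaths m (B.src m (x.edges m)) : ℝ)) atTop atTop :=
      tendsto_natCast_atTop_atTop.comp (hmono.tendsto_atTop_atTop (exists_npaths_ge x hx))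
    have hinv : Tendsto (fun m => ((B.npaths m (B.src m (x.edges m)) : ℝ))⁻¹) atTop (𝓝 0) :=
      htend.inv_tendsto_atTop
    refine squeeze_zero (fun m => ?_) (fun m => ?_) hinv
    · rw [hprodPath]
      exact hg0 _ _
    · rw [hprodPath]
      exact hb m

end Bratteli
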